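/- arXiv:2205.14805 — 3 statements merged into one kernel-verified Lean document; each statement's English description precedes it below -/
import Mathlib

section
/- For integers n ≥ k ≥ 1, the λ-analogues of r-Stirling numbers of the second kind satisfy the recurrence S₂_λ^{(r)}(n+1,k) = S₂_λ^{(r)}(n,k-1) + (λk + r) S₂_λ^{(r)}(n,k). -/
open Finset PowerSeries

/-- Generalized falling factorial `(x)_{n,λ}`. -/
def ffact (l x : ℝ) : ℕ → ℝ
  | 0 => 1
  | n + 1 => ffact l x n * (x - n * l)

lemma ffact_ml_ne_zero (l : ℝ) (hl : l ≠ 0) (m : ℕ) :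
    ∀ k : ℕ, k ≤ m → ffact l (m * l) k ≠ 0 := by
  intro k
  induction k with
  | zero => intro _; simp [ffact]
  | succ k ih =>
    intro hk
    have hkm : k < m := hk
    have h1 : ffact l (m * l) k ≠ 0 := ih (le_of_lt hkm)
    have h2 : (m : ℝ) * l - k * l ≠ 0 := by
      have : ((m : ℝ) - k) * l ≠ 0 := by
        apply mul_ne_zero _ hl
        have : (k : ℝ) < m := by exact_mod_cast hkm
        linarith
      rwa [sub_mul] at this
    show ffact l (m * l) k * ((m : ℝ) * l - k * l) ≠ 0
    exact mul_ne_zero h1 h2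

lemma ffact_ml_eq_zero (l : ℝ) (m : ℕ) :
    ∀ k : ℕ, m < k → ffact l (m * l) k = 0 := by
  intro k
  induction k with
  | zero => intro h; omega
  | succ k ih =>
    intro hk
    show ffact l (m * l) k * ((m : ℝ) * l - k * l) = 0
    rcases Nat.lt_or_ge m k with h | h
    · rw [ih h, zero_mul]
    · have : m = k := by omega
      subst this
      simp

lemma coeff_zero (l : ℝ) (hl : l ≠ 0) (N : ℕ) (c : ℕ → ℝ)
    (h : ∀ x : ℝ, ∑ k ∈ range (N + 1), c k * ffact l x k = 0) :
    ∀ m : ℕ, m ≤ N → c m = 0 := by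
  intro m
  induction m using Nat.strong_induction_on with
  | _ m ih =>
    intro hm
    have h0 := h (m * l)
    have hsub : (range (m + 1)) ⊆ range (N + 1) := by
      apply range_subset_range.mpr; omega
    have h1 : ∑ k ∈ range (N + 1), c k * ffact l (m * l) k
        = ∑ k ∈ range (m + 1), c k * ffact l (m * l) k := by
      refine (Finset.sum_subset hsub ?_).symm
      intro x _ hx
      have : m < x := by simpa using hx
      rw [ffact_ml_eq_zero l m x this, mul_zero]
    rw [h1, Finset.sum_range_succ] at h0
    have h2 : ∑ k ∈ range m, c k * ffact l (m * l) k = 0 := by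
      apply Finset.sum_eq_zero
      intro k hk
      have hk' : k < m := by simpa using hk
      rw [ih k hk' (by omega), zero_mul]
    rw [h2, zero_add] at h0
    exact (mul_eq_zero.mp h0).resolve_right (ffact_ml_ne_zero l hl m m le_rfl)

/-- Theorem 4: recurrence
`S₂_λ^{(r)}(n+1,k) = S₂_λ^{(r)}(n,k-1) + (λk + r) S₂_λ^{(r)}(n,k)` for n ≥ k ≥ 1. -/
theorem stmt3 (l : ℝ) (hl : l ≠ 0) (r : ℕ) (Sr : ℕ → ℕ → ℝ)
    (hSr : ∀ (n : ℕ) (x : ℝ), (x + r) ^ n = ∑ k ∈ range (n + 1), Sr n k * ffact l x k)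
    (n k : ℕ) (hk : 1 ≤ k) (hkn : k ≤ n) :
    Sr (n + 1) k = Sr n (k - 1) + (l * k + r) * Sr n k := by
  set c : ℕ → ℝ := fun j => Sr (n + 1) j
    - (if 1 ≤ j ∧ j ≤ n + 1 then Sr n (j - 1) else 0)
    - (if j ≤ n then (l * j + r) * Sr n j else 0) with hc
  have key : ∀ x : ℝ, ∑ j ∈ range (n + 2), c j * ffact l x j = 0 := by
    intro x
    have e1 : ∑ j ∈ range (n + 2), Sr (n + 1) j * ffact l x j = (x + r) ^ (n + 1) :=
      (hSr (n + 1) x).symm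
    have e2 : ∑ j ∈ range (n + 2),
        (if 1 ≤ j ∧ j ≤ n + 1 then Sr n (j - 1) else 0) * ffact l x j
        = ∑ j ∈ range (n + 1), Sr n j * ffact l x (j + 1) := by
      rw [Finset.sum_range_succ']
      simp only [Nat.add_sub_cancel]
      have : ∀ j ∈ range (n + 1),
          (if 1 ≤ j + 1 ∧ j + 1 ≤ n + 1 then Sr n j else 0) * ffact l x (j + 1)
          = Sr n j * ffact l x (j + 1) := by
        intro j hj
        have : j ≤ n := by simpa [Nat.lt_succ_iff] using hj
        rw [if_pos ⟨by omega, by omega⟩]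
      rw [Finset.sum_congr rfl this]
      simp
    have e3 : ∑ j ∈ range (n + 2),
        (if j ≤ n then (l * j + r) * Sr n j else 0) * ffact l x j
        = ∑ j ∈ range (n + 1), (l * j + r) * Sr n j * ffact l x j := by
      rw [Finset.sum_range_succ, if_neg (by omega), zero_mul, add_zero]
      apply Finset.sum_congr rfl
      intro j hj
      have : j ≤ n := by simpa [Nat.lt_succ_iff] using hj
      rw [if_pos this]
    have e4 : ∑ j ∈ range (n + 1), Sr n j * ffact l x (j + 1)
        + ∑ j ∈ range (n + 1), (l * j + r) * Sr n j * ffact l x j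
        = (x + r) ^ (n + 1) := by
      rw [← Finset.sum_add_distrib]
      have : ∀ j ∈ range (n + 1),
          Sr n j * ffact l x (j + 1) + (l * j + r) * Sr n j * ffact l x j
          = (x + r) * (Sr n j * ffact l x j) := by
        intro j _
        show Sr n j * (ffact l x j * (x - j * l)) + (l * j + r) * Sr n j * ffact l x j
          = (x + r) * (Sr n j * ffact l x j)
        ring
      rw [Finset.sum_congr rfl this, ← Finset.mul_sum, ← hSr n x, pow_succ]
      ring
    simp only [hc, sub_mul, Finset.sum_sub_distrib]
    rw [e1, e2, e3]
    linarith [e4]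
  have hck := coeff_zero l hl (n + 1) c key k (by omega)
  simp only [hc, if_pos (⟨hk, by omega⟩ : 1 ≤ k ∧ k ≤ n + 1), if_pos hkn] at hck
  linarith
end

section
/- For nonnegative integers n, k with n ≥ k, Σ_{l=k}^{n} C(n,l) W_{1,λ}(l,k) (λ−1)^{n-l} = S₂_λ(n+1, k+1). -/
open Finset PowerSeries

lemma ffact_shift (l x : ℝ) (k : ℕ) : x * ffact l (x - l) k = ffact l x (k + 1) := by
  induction k with
  | zero => simp [ffact]
  | succ k ih =>
    have e1 : ffact l (x - l) (k + 1) = ffact l (x - l) k * ((x - l) - k * l) := rfl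
    have e2 : ffact l x (k + 1 + 1) = ffact l x (k + 1) * (x - (↑(k + 1) : ℝ) * l) := rfl
    rw [e1, e2, ← mul_assoc, ih]
    push_cast
    ring

lemma ffact_diag (l : ℝ) (i : ℕ) : ∀ j ≤ i, ffact l (i * l) j = l ^ j * ∏ t ∈ range j, ((i : ℝ) - t) := by
  intro j hj
  induction j with
  | zero => simp [ffact]
  | succ j ih =>
    rw [ffact, ih (le_of_lt (Nat.lt_of_succ_le hj)), prod_range_succ]
    ring

lemma ffact_vanish (l : ℝ) (i j : ℕ) (hij : i < j) : ffact l (i * l) j = 0 := by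
  induction j with
  | zero => omega
  | succ j ih =>
    rcases Nat.lt_or_ge i j with h | h
    · rw [ffact, ih h, zero_mul]
    · have hji : j = i := by omega
      subst hji
      rw [ffact]
      ring

lemma ffact_diag_ne (l : ℝ) (hl : l ≠ 0) (i : ℕ) : ffact l (i * l) i ≠ 0 := by
  rw [ffact_diag l i i le_rfl]
  apply mul_ne_zero (pow_ne_zero _ hl)
  apply ne_of_gt
  apply Finset.prod_pos
  intro t ht
  have := Finset.mem_range.mp ht
  have : (t : ℝ) < i := by exact_mod_cast this
  linarith

lemma uniq (l : ℝ) (hl : l ≠ 0) (m : ℕ) (a : ℕ → ℝ)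
    (h : ∀ x : ℝ, ∑ j ∈ range m, a j * ffact l x j = 0) :
    ∀ j < m, a j = 0 := by
  intro j
  induction j using Nat.strong_induction_on with
  | _ j ih =>
    intro hj
    have hx := h (j * l)
    rw [Finset.sum_eq_single j] at hx
    · exact (mul_eq_zero.mp hx).resolve_right (ffact_diag_ne l hl j)
    · intro t ht htj
      rcases Nat.lt_or_ge t j with h' | h'
      · rw [ih t h' (lt_trans h' hj), zero_mul]
      · have : j < t := lt_of_le_of_ne h' (Ne.symm htj)
        rw [ffact_vanish l j t this, mul_zero]
    · intro hjm
      exact absurd (Finset.mem_range.mpr hj) hjm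

/-- Theorem 9: `∑_{l=k}^n C(n,l) W_{1,λ}(l,k) (λ-1)^{n-l} = S₂_λ(n+1,k+1)`. -/
theorem stmt8 (l : ℝ) (hl : l ≠ 0) (S W : ℕ → ℕ → ℝ)
    (hS : ∀ (n : ℕ) (x : ℝ), x ^ n = ∑ k ∈ range (n + 1), S n k * ffact l x k)
    (hW : ∀ (n : ℕ) (x : ℝ), (x + 1) ^ n = ∑ k ∈ range (n + 1), W n k * ffact l x k)
    (n k : ℕ) (hkn : k ≤ n) :
    ∑ j ∈ Icc k n, (n.choose j : ℝ) * W j k * (l - 1) ^ (n - j) = S (n + 1) (k + 1) := by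
  set c : ℕ → ℝ := fun k => ∑ j ∈ Icc k n, (n.choose j : ℝ) * W j k * (l - 1) ^ (n - j) with hc
  set a : ℕ → ℝ := fun j => S (n + 1) j - (if j = 0 then 0 else c (j - 1)) with ha
  have key : ∀ x : ℝ, ∑ j ∈ range (n + 2), a j * ffact l x j = 0 := by
    intro x
    have h2 : x ^ (n + 1) = ∑ kk ∈ range (n + 1), c kk * ffact l x (kk + 1) := by
      have hbin : x ^ n = ∑ i ∈ range (n + 1),
          ((x - l + 1) ^ i * (l - 1) ^ (n - i) * (n.choose i : ℝ)) := by
        have := add_pow (x - l + 1) (l - 1) n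
        rw [show (x - l + 1) + (l - 1) = x by ring] at this
        exact this
      have step : x ^ (n + 1) = ∑ i ∈ range (n + 1), ∑ kk ∈ range (i + 1),
          ((n.choose i : ℝ) * W i kk * (l - 1) ^ (n - i)) * ffact l x (kk + 1) := by
        calc x ^ (n + 1) = x * x ^ n := by ring
        _ = ∑ i ∈ range (n + 1), ((l - 1) ^ (n - i) * (n.choose i : ℝ)) *
              (x * (x - l + 1) ^ i) := by
            rw [hbin, Finset.mul_sum]; apply Finset.sum_congr rfl; intro i _; ring
        _ = ∑ i ∈ range (n + 1), ((l - 1) ^ (n - i) * (n.choose i : ℝ)) *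
              (x * ∑ kk ∈ range (i + 1), W i kk * ffact l (x - l) kk) := by
            apply Finset.sum_congr rfl; intro i _
            rw [show x - l + 1 = (x - l) + 1 by ring, hW i (x - l)]
        _ = _ := by
            apply Finset.sum_congr rfl; intro i _
            rw [Finset.mul_sum, Finset.mul_sum]
            apply Finset.sum_congr rfl; intro kk _
            rw [← ffact_shift l x kk]
            ring
      rw [step, Finset.sum_comm' (t' := range (n + 1)) (s' := fun kk => Icc kk n)]
      · apply Finset.sum_congr rfl
        intro kk _
        rw [hc, Finset.sum_mul]
      · intro i kk
        simp only [Finset.mem_range, Finset.mem_Icc]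
        omega
    have h1 := hS (n + 1) x
    have hsplit : ∑ j ∈ range (n + 2), a j * ffact l x j =
        (∑ j ∈ range (n + 1), a (j + 1) * ffact l x (j + 1)) + a 0 * ffact l x 0 :=
      Finset.sum_range_succ' _ (n + 1)
    rw [hsplit]
    have ha0 : a 0 * ffact l x 0 = S (n + 1) 0 * ffact l x 0 := by
      simp [ha]
    rw [ha0]
    have : ∀ j ∈ range (n + 1), a (j + 1) * ffact l x (j + 1) =
        S (n + 1) (j + 1) * ffact l x (j + 1) - c j * ffact l x (j + 1) := by
      intro j _
      simp only [ha, Nat.add_sub_cancel, if_neg (Nat.succ_ne_zero j)]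
      ring
    rw [Finset.sum_congr rfl this, Finset.sum_sub_distrib, ← h2]
    have h1' : ∑ j ∈ range (n + 2), S (n + 1) j * ffact l x j = x ^ (n + 1) := (hS (n + 1) x).symm
    have hs2 : ∑ j ∈ range (n + 2), S (n + 1) j * ffact l x j =
        (∑ j ∈ range (n + 1), S (n + 1) (j + 1) * ffact l x (j + 1)) + S (n + 1) 0 * ffact l x 0 :=
      Finset.sum_range_succ' _ (n + 1)
    rw [hs2] at h1'
    linarith
  have := uniq l hl (n + 2) a key (k + 1) (by omega)
  simp only [ha, Nat.add_sub_cancel, if_neg (Nat.succ_ne_zero k)] at this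
  exact (sub_eq_zero.mp this).symm
end

section
/- For nonnegative integer k, positive integers m, r, as formal power series in t, (1/k!)(1/λ^k)((e^{λmt}−1)/m)^k e^{rt} = Σ_{n≥k} W^{(r)}_{m,λ}(n,k) t^n/n!, where W^{(r)}_{m,λ}(n,k) are the λ-analogues of the Whitney-type r-Stirling numbers of the second kind. -/
open Finset PowerSeries

lemma ffact_nat_mul (l : ℝ) (j : ℕ) :
    ∀ i : ℕ, ffact l ((j : ℝ) * l) i = l ^ i * (j.descFactorial i : ℝ)
  | 0 => by simp [ffact]
  | i + 1 => by
    rw [ffact, ffact_nat_mul l j i, Nat.descFactorial_succ]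
    rcases le_or_gt i j with h | h
    · push_cast [Nat.cast_sub h]
      ring
    · rw [Nat.descFactorial_eq_zero_iff_lt.2 h]
      push_cast
      ring

lemma choose_descFactorial (i t k : ℕ) (h : i + t ≤ k) :
    k.choose (i + t) * (i + t).descFactorial i = k.descFactorial i * (k - i).choose t := by
  rw [Nat.descFactorial_eq_factorial_mul_choose, Nat.descFactorial_eq_factorial_mul_choose]
  have h2 := Nat.choose_mul (n := k) (Nat.le_add_right i t)
  rw [Nat.add_sub_cancel_left] at h2
  calc k.choose (i + t) * (Nat.factorial i * (i + t).choose i)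
      = Nat.factorial i * (k.choose (i + t) * (i + t).choose i) := by ring
    _ = Nat.factorial i * (k.choose i * (k - i).choose t) := by rw [h2]
    _ = Nat.factorial i * k.choose i * (k - i).choose t := by ring

lemma alt_sum_real (m : ℕ) :
    (∑ t ∈ range (m + 1), (-1 : ℝ) ^ t * (m.choose t)) = if m = 0 then 1 else 0 := by
  have h2 := congrArg (fun z : ℤ => (z : ℝ)) (Int.alternating_sum_range_choose (n := m))
  push_cast at h2
  simpa [apply_ite (fun z : ℤ => (z : ℝ))] using h2

lemma alt_sum (k i : ℕ) :
    ∑ j ∈ range (k + 1), (-1 : ℝ) ^ (k - j) * (k.choose j) * (j.descFactorial i)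
      = if i = k then (k.factorial : ℝ) else 0 := by
  rcases lt_or_ge k i with hki | hik
  · rw [if_neg (by omega)]
    refine Finset.sum_eq_zero fun j hj => ?_
    rw [mem_range] at hj
    rw [Nat.descFactorial_eq_zero_iff_lt.2 (by omega)]
    simp
  · have hsub : Finset.Ico i (k + 1) ⊆ range (k + 1) := by
      intro x hx; rw [mem_range]; exact (Finset.mem_Ico.1 hx).2
    rw [← Finset.sum_subset hsub (fun x hx hx2 => by
      have hxi : x < i := by
        rw [mem_range] at hx; rw [Finset.mem_Ico] at hx2; omega
      rw [Nat.descFactorial_eq_zero_iff_lt.2 hxi]; simp)]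
    rw [Finset.sum_Ico_eq_sum_range]
    have hkk : k + 1 - i = (k - i) + 1 := by omega
    rw [hkk]
    have hterm : ∀ t ∈ range ((k - i) + 1),
        (-1 : ℝ) ^ (k - (i + t)) * (k.choose (i + t)) * ((i + t).descFactorial i)
          = ((k.descFactorial i : ℝ)) * ((-1 : ℝ) ^ ((k - i) - t) * ((k - i).choose t)) := by
      intro t ht
      rw [mem_range] at ht
      have hit : i + t ≤ k := by omega
      have hcast : (k.choose (i + t) : ℝ) * ((i + t).descFactorial i : ℝ)
          = (k.descFactorial i : ℝ) * ((k - i).choose t : ℝ) := by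
        exact_mod_cast congrArg (fun z : ℕ => (z : ℝ)) (choose_descFactorial i t k hit)
      have hexp : k - (i + t) = (k - i) - t := by omega
      rw [hexp, mul_assoc, hcast]
      ring
    rw [Finset.sum_congr rfl hterm, ← Finset.mul_sum]
    have hsum : (∑ t ∈ range ((k - i) + 1), (-1 : ℝ) ^ ((k - i) - t) * ((k - i).choose t))
        = if k - i = 0 then (-1 : ℝ) ^ (k - i) else 0 := by
      have hterm2 : ∀ t ∈ range ((k - i) + 1),
          (-1 : ℝ) ^ ((k - i) - t) * ((k - i).choose t)
            = (-1 : ℝ) ^ (k - i) * ((-1 : ℝ) ^ t * ((k - i).choose t)) := by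
        intro t ht
        rw [mem_range] at ht
        have hpp : (-1 : ℝ) ^ ((k - i) - t) * (-1 : ℝ) ^ t = (-1 : ℝ) ^ (k - i) := by
          rw [← pow_add]
          congr 1
          omega
        calc (-1 : ℝ) ^ ((k - i) - t) * ((k - i).choose t)
            = ((-1 : ℝ) ^ ((k - i) - t) * (-1 : ℝ) ^ t * (-1 : ℝ) ^ t) * ((k - i).choose t) := by
              rw [mul_assoc ((-1 : ℝ) ^ ((k - i) - t)), ← pow_add, ← two_mul]
              simp [pow_mul]
          _ = (-1 : ℝ) ^ (k - i) * ((-1 : ℝ) ^ t * ((k - i).choose t)) := by rw [hpp, mul_assoc]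
      rw [Finset.sum_congr rfl hterm2, ← Finset.mul_sum, alt_sum_real]
      split_ifs <;> simp
    rw [hsum]
    rcases eq_or_lt_of_le hik with h | h
    · subst h
      simp [Nat.descFactorial_self]
    · rw [if_neg (by omega), if_neg (by omega), mul_zero]

/-- Theorem 12: generating function of the λ-analogues of the Whitney-type r-Stirling
numbers of the second kind:
`(1/k!)(1/λᵏ)((e^{λmt}-1)/m)ᵏ e^{rt} = ∑_{n ≥ k} W^{(r)}_{m,λ}(n,k) tⁿ/n!`. -/
theorem stmt11 (l : ℝ) (hl : l ≠ 0) (m r : ℕ) (hm : 0 < m) (hr : 0 < r)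
    (W : ℕ → ℕ → ℝ)
    (hW : ∀ (n : ℕ) (x : ℝ),
      ((m : ℝ) * x + r) ^ n = ∑ k ∈ range (n + 1), W n k * (m : ℝ) ^ k * ffact l x k)
    (k : ℕ) :
    PowerSeries.C (R := ℝ) ((1 / k.factorial) * (1 / l ^ k)) *
        (PowerSeries.C (R := ℝ) (1 / (m : ℝ)) * (rescale (l * m) (PowerSeries.exp ℝ) - 1)) ^ k *
        rescale (r : ℝ) (PowerSeries.exp ℝ) =
      PowerSeries.mk (fun n => if k ≤ n then W n k / n.factorial else 0) := by
  have hm0 : (m : ℝ) ≠ 0 := Nat.cast_ne_zero.2 hm.ne'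
  have hRj : ∀ j : ℕ, (rescale (l * m) (exp ℝ)) ^ j = rescale ((j : ℝ) * (l * m)) (exp ℝ) := by
    intro j
    rw [← map_pow, exp_pow_eq_rescale_exp, rescale_rescale]
  have hser : (PowerSeries.C (1 / (m : ℝ)) * (rescale (l * m) (exp ℝ) - 1)) ^ k *
        rescale (r : ℝ) (exp ℝ)
      = ∑ j ∈ range (k + 1),
          PowerSeries.C ((1 / (m : ℝ)) ^ k * (-1) ^ (j + k) * (k.choose j)) *
            rescale ((j : ℝ) * (l * m) + r) (exp ℝ) := by
    rw [mul_pow, sub_pow, Finset.mul_sum, Finset.sum_mul]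
    refine Finset.sum_congr rfl fun j hj => ?_
    rw [hRj j, one_pow, mul_one, map_mul, map_mul, map_pow]
    have h1 : ((-1 : ℝ⟦X⟧) ^ (j + k)) = PowerSeries.C ((-1 : ℝ) ^ (j + k)) := by
      rw [map_pow, map_neg, map_one]
    have h2 : ((k.choose j : ℝ⟦X⟧)) = PowerSeries.C (k.choose j : ℝ) := by simp
    rw [h1, h2, ← exp_mul_exp_eq_exp_add ((j : ℝ) * (l * m)) (r : ℝ)]
    ring
  rw [mul_assoc, hser]
  ext n
  rw [coeff_C_mul, map_sum, coeff_mk]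
  have hco : ∀ j ∈ range (k + 1),
      (coeff n) (PowerSeries.C ((1 / (m : ℝ)) ^ k * (-1) ^ (j + k) * (k.choose j)) *
        rescale ((j : ℝ) * (l * m) + r) (exp ℝ))
      = (1 / (m : ℝ)) ^ k / n.factorial *
          ((-1 : ℝ) ^ (k - j) * (k.choose j) * (((j : ℝ) * (l * m) + r) ^ n)) := by
    intro j hj
    rw [mem_range] at hj
    rw [coeff_C_mul, coeff_rescale, coeff_exp]
    have hsgn : (-1 : ℝ) ^ (j + k) = (-1 : ℝ) ^ (k - j) := by
      have he : j + k = (k - j) + 2 * j := by omega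
      rw [he, pow_add, pow_mul]
      simp
    rw [hsgn]
    push_cast
    ring
  rw [Finset.sum_congr rfl hco, ← Finset.mul_sum]
  -- the combinatorial identity
  have hWj : ∀ j : ℕ, ((j : ℝ) * (l * m) + r) ^ n
      = ∑ i ∈ range (n + 1), W n i * (m : ℝ) ^ i * (l ^ i * (j.descFactorial i : ℝ)) := by
    intro j
    have h1 := hW n ((j : ℝ) * l)
    have h2 : ((m : ℝ) * ((j : ℝ) * l) + r) = ((j : ℝ) * (l * m) + r) := by ring
    rw [h2] at h1
    rw [h1]
    exact Finset.sum_congr rfl fun i _ => by rw [ffact_nat_mul]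
  have hkey : (∑ j ∈ range (k + 1),
        (-1 : ℝ) ^ (k - j) * (k.choose j) * (((j : ℝ) * (l * m) + r) ^ n))
      = if k ≤ n then W n k * (m : ℝ) ^ k * l ^ k * (k.factorial : ℝ) else 0 := by
    calc ∑ j ∈ range (k + 1), (-1 : ℝ) ^ (k - j) * (k.choose j) * (((j : ℝ) * (l * m) + r) ^ n)
        = ∑ j ∈ range (k + 1), ∑ i ∈ range (n + 1),
            W n i * (m : ℝ) ^ i * l ^ i *
              ((-1 : ℝ) ^ (k - j) * (k.choose j) * (j.descFactorial i)) := by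
          refine Finset.sum_congr rfl fun j _ => ?_
          rw [hWj j, Finset.mul_sum]
          exact Finset.sum_congr rfl fun i _ => by ring
      _ = ∑ i ∈ range (n + 1), W n i * (m : ℝ) ^ i * l ^ i *
            (∑ j ∈ range (k + 1), (-1 : ℝ) ^ (k - j) * (k.choose j) * (j.descFactorial i)) := by
          rw [Finset.sum_comm]
          exact Finset.sum_congr rfl fun i _ => by rw [Finset.mul_sum]
      _ = ∑ i ∈ range (n + 1), W n i * (m : ℝ) ^ i * l ^ i *
            (if i = k then (k.factorial : ℝ) else 0) := by
          exact Finset.sum_congr rfl fun i _ => by rw [alt_sum]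
      _ = if k ≤ n then W n k * (m : ℝ) ^ k * l ^ k * (k.factorial : ℝ) else 0 := by
          simp only [mul_ite, mul_zero]
          rw [Finset.sum_ite_eq' (range (n + 1)) k]
          simp [Nat.lt_succ_iff]
  rw [hkey]
  have hk0 : (k.factorial : ℝ) ≠ 0 := by positivity
  have hn0 : (n.factorial : ℝ) ≠ 0 := by positivity
  rcases le_or_gt k n with h | h
  · rw [if_pos h, if_pos h]
    field_simp
    ring_nf
    rw [← mul_pow, mul_inv_cancel₀ hm0, one_pow, one_mul]
  · rw [if_neg (by omega), if_neg (by omega), mul_zero, mul_zero]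
end
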